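/- Let Ω be a nonempty open subset of ℝ^{n+1} (n ≥ 1) with nonempty topological boundary ∂Ω, and let u(y) = dist(y, ∂Ω). Let 0 < s < t, let x ∈ ∂Ω and z ∈ Ω satisfy u(z) = ‖x − z‖ = t, and set y = x + (s/t)(z − x). Then: (i) the open ball B_{t−s}(z) is contained in Ω_s = {u > s}; (ii) Ω_s is disjoint from the closed ball B̄_s(x); (iii) u(y) = s, ‖y − x‖ = s and ‖y − z‖ = t − s, so that y is the unique point of ∂B_{t−s}(z) ∩ ∂B_s(x); and (iv) x is the unique point of ∂Ω at distance u(y) = s from y. -/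

import Mathlib

open RealInnerProductSpace Metric Set

/-- Tangent-ball properties at a point `y = x + (s/t)(z - x)` of `Γ_s^t`:
interior ball `B_{t-s}(z) ⊆ Ω_s`, exterior ball `Ω_s ∩ B̄_s(x) = ∅`,
`u(y) = s`, `‖y - x‖ = s`, `‖y - z‖ = t - s`, `y` is the unique point of
`∂B_{t-s}(z) ∩ ∂B_s(x)`, and `x` is the unique point of `∂Ω` at distance `s` from `y`. -/
theorem stmt_5 (n : ℕ) (hn : 1 ≤ n)
    (Ω : Set (EuclideanSpace ℝ (Fin (n + 1))))
    (hΩopen : IsOpen Ω) (hΩne : Ω.Nonempty) (hfr : (frontier Ω).Nonempty)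
    (u : EuclideanSpace ℝ (Fin (n + 1)) → ℝ)
    (hu : ∀ y, u y = Metric.infDist y (frontier Ω))
    (s t : ℝ) (hs : 0 < s) (hst : s < t)
    (x z y : EuclideanSpace ℝ (Fin (n + 1)))
    (hx : x ∈ frontier Ω) (hz : z ∈ Ω) (huz : u z = t) (hxz : ‖x - z‖ = t)
    (hy : y = x + (s / t) • (z - x)) :
    Metric.ball z (t - s) ⊆ {w | w ∈ Ω ∧ s < u w} ∧
    Disjoint {w | w ∈ Ω ∧ s < u w} (Metric.closedBall x s) ∧
    (u y = s ∧ ‖y - x‖ = s ∧ ‖y - z‖ = t - s ∧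
      ∀ w : EuclideanSpace ℝ (Fin (n + 1)),
        w ∈ Metric.sphere z (t - s) → w ∈ Metric.sphere x s → w = y) ∧
    (∀ x' ∈ frontier Ω, ‖y - x'‖ = s → x' = x) := by
  have ht : (0:ℝ) < t := hs.trans hst
  have htne : t ≠ 0 := ht.ne'
  rw [hu] at huz
  -- the infDist bound at points of the frontier
  have hfr_dist : ∀ w ∈ frontier Ω, t ≤ dist z w := fun w hw => by
    have := Metric.infDist_le_dist_of_mem hw (x := z)
    linarith
  -- the open ball of radius t around z is contained in Ω
  have hball : Metric.ball z t ⊆ Ω := by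
    have hpre : IsPreconnected (Metric.ball z t) := (convex_ball z t).isPreconnected
    have hsub : Metric.ball z t ⊆ Ω ∪ (closure Ω)ᶜ := by
      intro w hw
      by_cases hwΩ : w ∈ Ω
      · exact Or.inl hwΩ
      · refine Or.inr fun hwc => ?_
        have hwf : w ∈ frontier Ω := ⟨hwc, by rwa [hΩopen.interior_eq]⟩
        have := hfr_dist w hwf
        rw [Metric.mem_ball, dist_comm] at hw
        linarith
    have := hpre.subset_left_of_subset_union hΩopen isClosed_closure.isOpen_compl
      (disjoint_compl_right.mono_left subset_closure) hsub
      ⟨z, Metric.mem_ball_self ht, hz⟩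
    exact this
  -- basic norm computations for y
  have ty : t • y = (t - s) • x + s • z := by
    rw [hy]; match_scalars <;> (field_simp; try ring)
  have hyx : ‖y - x‖ = s := by
    have : y - x = (s / t) • (z - x) := by rw [hy]; abel
    rw [this, norm_smul, ← norm_neg (z - x), neg_sub, hxz, Real.norm_eq_abs,
      abs_of_pos (div_pos hs ht)]
    field_simp
  have hyz : ‖y - z‖ = t - s := by
    have : y - z = ((s - t) / t) • (z - x) := by
      rw [hy]; match_scalars <;> (field_simp; try ring)
    rw [this, norm_smul, ← norm_neg (z - x), neg_sub, hxz, Real.norm_eq_abs,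
      abs_of_neg (div_neg_of_neg_of_pos (by linarith) ht)]
    field_simp
    ring
  refine ⟨?_, ?_, ⟨?_, hyx, hyz, ?_⟩, ?_⟩
  · -- interior ball
    intro w hw
    rw [Metric.mem_ball] at hw
    refine ⟨hball (Metric.mem_ball.mpr (by linarith)), ?_⟩
    rw [hu]
    have := Metric.infDist_le_infDist_add_dist (x := z) (y := w) (s := frontier Ω)
    rw [dist_comm] at this
    linarith
  · -- exterior ball
    rw [Set.disjoint_left]
    rintro w ⟨hwΩ, hws⟩ hwball
    rw [hu] at hws
    have h1 : Metric.infDist w (frontier Ω) ≤ dist w x := Metric.infDist_le_dist_of_mem hx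
    rw [Metric.mem_closedBall] at hwball
    linarith
  · -- u y = s
    rw [hu]
    refine le_antisymm ?_ ?_
    · have := Metric.infDist_le_dist_of_mem hx (x := y)
      rwa [dist_eq_norm, hyx] at this
    · have := Metric.infDist_le_infDist_add_dist (x := z) (y := y) (s := frontier Ω)
      rw [dist_eq_norm, ← norm_neg (z - y), neg_sub, hyz] at this
      linarith
  · -- uniqueness of the sphere intersection point
    intro w hwz hwx
    rw [Metric.mem_sphere, dist_eq_norm] at hwz
    rw [Metric.mem_sphere, dist_eq_norm] at hwx
    have hsum : ‖(x - w) + (w - z)‖ = ‖x - w‖ + ‖w - z‖ := by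
      have hxw : ‖x - w‖ = s := by rw [← norm_neg (x - w), neg_sub, hwx]
      rw [show (x - w) + (w - z) = x - z by abel, hxz, hxw, hwz]; ring
    have hray : SameRay ℝ (x - w) (w - z) := sameRay_iff_norm_add.mpr hsum
    have heq := hray.norm_smul_eq
    rw [show ‖x - w‖ = s by rw [← norm_neg (x - w), neg_sub, hwx], hwz] at heq
    have tw : t • w = (t - s) • x + s • z := by
      linear_combination (norm := module) heq
    have : t • w = t • y := by rw [tw, ty]
    exact smul_right_injective _ htne this
  · -- uniqueness of the frontier point at distance s
    intro x' hx' hxy'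
    have h1 : t ≤ ‖z - x'‖ := by
      have := hfr_dist x' hx'
      rwa [dist_eq_norm] at this
    have h2 : ‖z - x'‖ ≤ t := by
      have := norm_add_le (z - y) (y - x')
      rw [show (z - y) + (y - x') = z - x' by abel, show ‖z - y‖ = t - s by
        rw [← norm_neg (z - y), neg_sub, hyz], hxy'] at this
      linarith
    have hsum : ‖(z - y) + (y - x')‖ = ‖z - y‖ + ‖y - x'‖ := by
      rw [show (z - y) + (y - x') = z - x' by abel, le_antisymm h2 h1,
        show ‖z - y‖ = t - s by rw [← norm_neg (z - y), neg_sub, hyz], hxy']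
      ring
    have hray : SameRay ℝ (z - y) (y - x') := sameRay_iff_norm_add.mpr hsum
    have heq := hray.norm_smul_eq
    rw [show ‖z - y‖ = t - s by rw [← norm_neg (z - y), neg_sub, hyz], hxy'] at heq
    have tx' : t • y = (t - s) • x' + s • z := by
      linear_combination (norm := module) heq
    have : (t - s) • x' = (t - s) • x := by
      have := tx'.symm.trans ty
      linear_combination (norm := module) this
    exact smul_right_injective _ (by linarith : t - s ≠ 0) this
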